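/- Let S = ⟨r₁,…,r_k⟩ with d = gcd(r₁,…,r_k) and n > r_k² with dn ∈ S, gcd(n,d)=1. Then g(M_n) = Σ_{i=0}^{n−1} ⌊di/n⌋ + d·g(S/d) + Σ_{i < n, di ∈ S} m_S(di) + Σ_{i ≥ 0, di ∉ S} m_S(di + dn), where g(S/d) = |ℤ≥0 \ (S/d)| for the primitive monoid S/d = ⟨r₁/d,…,r_k/d⟩. -/

import Mathlib

open scoped Classical

/-- Membership in the additive submonoid of `ℕ` generated by `r 0, …, r (k-1)`. -/
def memGen {k : ℕ} (r : Fin k → ℕ) (a : ℕ) : Prop :=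
  ∃ z : Fin k → ℕ, a = ∑ i, z i * r i

/-- The Apéry set `Ap(S; x) = {m ∈ S : m - x ∉ S}` (subtraction in `ℤ`,
encoded by the guard `x ≤ m`). -/
def aperySet {k : ℕ} (r : Fin k → ℕ) (x : ℕ) : Set ℕ :=
  {m | memGen r m ∧ ¬(x ≤ m ∧ memGen r (m - x))}

/-- The set of factorization lengths of `a` in the monoid generated by `r`. -/
def lenSet {k : ℕ} (r : Fin k → ℕ) (a : ℕ) : Set ℕ :=
  {ℓ | ∃ z : Fin k → ℕ, a = ∑ i, z i * r i ∧ ℓ = ∑ i, z i}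

/-- The minimum factorization length of `a` in the monoid generated by `r`. -/
noncomputable def minLen {k : ℕ} (r : Fin k → ℕ) (a : ℕ) : ℕ :=
  sInf (lenSet r a)

/-- The generators `n, n + r 0, …, n + r (k-1)` of the shifted monoid `M_n`. -/
def shiftGen {k : ℕ} (n : ℕ) (r : Fin k → ℕ) : Fin (k + 1) → ℕ :=
  Fin.cons n (fun i => n + r i)

/-- The genus: the number of gaps of the monoid generated by `r`. -/
noncomputable def genus {k : ℕ} (r : Fin k → ℕ) : ℕ :=
  Set.ncard {m : ℕ | ¬ memGen r m}

/-- The Frobenius number: the largest gap of the monoid generated by `r`. -/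
noncomputable def frob {k : ℕ} (r : Fin k → ℕ) : ℕ :=
  sSup {m : ℕ | ¬ memGen r m}

/-- The set of pseudo-Frobenius numbers of the monoid generated by `r`. -/
def pseudoFrob {k : ℕ} (r : Fin k → ℕ) : Set ℕ :=
  {m | ¬ memGen r m ∧ ∀ x : ℕ, memGen r x → 0 < x → memGen r (m + x)}

namespace GenusAux

variable {k : ℕ}

lemma list_to_fun (s : Fin (k+1) → ℕ) (l : List (Fin (k+1))) :
    ∃ z : Fin (k+1) → ℕ, (l.map s).sum = ∑ i, z i * s i ∧ l.length = ∑ i, z i := by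
  induction l with
  | nil => exact ⟨0, by simp⟩
  | cons a l ih =>
    obtain ⟨z, h1, h2⟩ := ih
    refine ⟨fun i => (if a = i then 1 else 0) + z i, ?_, ?_⟩
    · simp only [List.map_cons, List.sum_cons, h1, add_mul, Finset.sum_add_distrib,
        ite_mul, one_mul, zero_mul, Finset.sum_ite_eq, Finset.mem_univ, if_true]
    · simp only [List.length_cons, h2, Finset.sum_add_distrib, Finset.sum_ite_eq,
        Finset.mem_univ, if_true]
      omega

lemma fun_to_list (s z : Fin (k+1) → ℕ) :
    ∃ l : List (Fin (k+1)), (l.map s).sum = ∑ i, z i * s i ∧ l.length = ∑ i, z i := by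
  have key : ∀ L : List (Fin (k+1)),
      (((L.flatMap fun i => List.replicate (z i) i).map s).sum
          = (L.map fun i => z i * s i).sum) ∧
      ((L.flatMap fun i => List.replicate (z i) i).length = (L.map fun i => z i).sum) := by
    intro L
    induction L with
    | nil => simp
    | cons a L ih =>
      simp [List.flatMap_cons, ih.1, ih.2, List.sum_replicate, smul_eq_mul]
  refine ⟨(List.finRange (k+1)).flatMap fun i => List.replicate (z i) i, ?_, ?_⟩
  · rw [(key (List.finRange (k+1))).1, Fin.sum_univ_def]
  · rw [(key (List.finRange (k+1))).2, Fin.sum_univ_def]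

lemma lenSet_iff (s : Fin (k+1) → ℕ) (a ℓ : ℕ) :
    ℓ ∈ lenSet s a ↔ ∃ l : List (Fin (k+1)), a = (l.map s).sum ∧ ℓ = l.length := by
  constructor
  · rintro ⟨z, rfl, rfl⟩
    obtain ⟨l, h1, h2⟩ := fun_to_list s z
    exact ⟨l, h1.symm, h2.symm⟩
  · rintro ⟨l, rfl, rfl⟩
    obtain ⟨z, h1, h2⟩ := list_to_fun s l
    exact ⟨z, h1, h2⟩

lemma memGen_iff_list (s : Fin (k+1) → ℕ) (a : ℕ) :
    memGen s a ↔ ∃ l : List (Fin (k+1)), a = (l.map s).sum := by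
  constructor
  · rintro ⟨z, rfl⟩
    obtain ⟨l, h1, _⟩ := fun_to_list s z
    exact ⟨l, h1.symm⟩
  · rintro ⟨l, rfl⟩
    obtain ⟨z, h1, _⟩ := list_to_fun s l
    exact ⟨z, h1⟩

lemma minLen_le (s : Fin (k+1) → ℕ) {a : ℕ} (l : List (Fin (k+1))) (h : a = (l.map s).sum) :
    minLen s a ≤ l.length :=
  Nat.sInf_le ((lenSet_iff s a l.length).mpr ⟨l, h, rfl⟩)

lemma exists_minLen_list (s : Fin (k+1) → ℕ) {a : ℕ} (h : memGen s a) :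
    ∃ l : List (Fin (k+1)), a = (l.map s).sum ∧ l.length = minLen s a := by
  have hne : (lenSet s a).Nonempty := by
    obtain ⟨z, hz⟩ := h; exact ⟨∑ i, z i, z, hz, rfl⟩
  obtain ⟨l, h1, h2⟩ := (lenSet_iff s a _).mp (Nat.sInf_mem hne)
  exact ⟨l, h1, h2.symm⟩

lemma exists_chunk {α : Type*} (f : α → ℕ) {m : ℕ} (hm : 0 < m) (l : List α)
    (hl : m ≤ l.length) :
    ∃ l₁ l₂ l₃ : List α, l = l₁ ++ (l₂ ++ l₃) ∧ l₂ ≠ [] ∧ m ∣ (l₂.map f).sum := by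
  have hmaps : ∀ j ∈ Finset.range (m+1), ((l.take j).map f).sum % m ∈ Finset.range m :=
    fun j _ => Finset.mem_range.mpr (Nat.mod_lt _ hm)
  obtain ⟨a, ha, b, hb, hab, heq⟩ :=
    Finset.exists_ne_map_eq_of_card_lt_of_maps_to (by simp) hmaps
  wlog hlt : a < b generalizing a b
  · exact this b hb a ha hab.symm heq.symm (by omega)
  have hbb : b < m + 1 := Finset.mem_range.mp hb
  have hbm : b ≤ l.length := le_trans (by omega : b ≤ m) hl
  have h1 : a + (b - a) = b := by omega
  refine ⟨l.take a, (l.drop a).take (b - a), l.drop b, ?_, ?_, ?_⟩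
  · calc l = l.take a ++ l.drop a := (List.take_append_drop a l).symm
      _ = l.take a ++ ((l.drop a).take (b-a) ++ ((l.drop a).drop (b-a))) := by
          rw [List.take_append_drop, List.take_append_drop, List.take_append_drop]
      _ = _ := by rw [List.drop_drop, h1]
  · have hlen2 : ((l.drop a).take (b-a)).length = b - a := by
      rw [List.length_take, List.length_drop]; omega
    intro hnil
    rw [hnil] at hlen2; simp at hlen2; omega
  · have h2 : l.take b = l.take a ++ (l.drop a).take (b - a) := by
      conv_lhs => rw [← h1]
      rw [List.take_add]
    have h3 : ((l.take b).map f).sum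
        = ((l.take a).map f).sum + (((l.drop a).take (b-a)).map f).sum := by
      rw [h2, List.map_append, List.sum_append]
    have h4 : ((l.take a).map f).sum ≡ ((l.take b).map f).sum [MOD m] := heq
    have h5 := (Nat.modEq_iff_dvd' (by rw [h3]; exact Nat.le_add_right _ _)).mp h4
    rw [h3, Nat.add_sub_cancel_left] at h5
    exact h5

lemma sum_all_eq {L : List ℕ} {v : ℕ} (h : ∀ x ∈ L, x = v) : L.sum = L.length * v := by
  induction L with
  | nil => simp
  | cons a L ih =>
    rw [List.sum_cons, List.length_cons, ih (fun x hx => h x (List.mem_cons_of_mem a hx)),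
      h a (List.mem_cons_self)]
    ring

lemma length_le_sum' {L : List ℕ} (h : ∀ x ∈ L, 1 ≤ x) : L.length ≤ L.sum := by
  induction L with
  | nil => simp
  | cons a L ih =>
    rw [List.sum_cons, List.length_cons]
    have h1 := h a (List.mem_cons_self)
    have h2 := ih fun x hx => h x (List.mem_cons_of_mem a hx)
    omega

lemma filter_eq_nil_of {α : Type*} (p : α → Bool) (l : List α) (h : ∀ a ∈ l, p a = false) :
    l.filter p = [] := by
  induction l with
  | nil => rfl
  | cons a l ih =>
    have h1 : p a = false := h a (List.mem_cons_self)
    have h2 := ih fun x hx => h x (List.mem_cons_of_mem a hx)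
    simp [List.filter_cons, h1, h2]

lemma filter_eq_self_of {α : Type*} (p : α → Bool) (l : List α) (h : ∀ a ∈ l, p a = true) :
    l.filter p = l := by
  induction l with
  | nil => rfl
  | cons a l ih =>
    have h1 : p a = true := h a (List.mem_cons_self)
    have h2 := ih fun x hx => h x (List.mem_cons_of_mem a hx)
    simp [List.filter_cons, h1, h2]

lemma exists_reduced (s : Fin (k+1) → ℕ) (hs0 : ∀ i, 0 < s i)
    {t : ℕ} (h : memGen s t) :
    ∃ l : List (Fin (k+1)), t = (l.map s).sum ∧
      (l.filter fun i => decide (i ≠ Fin.last k)).length < s (Fin.last k) := by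
  have hq0 : 0 < s (Fin.last k) := hs0 _
  obtain ⟨l0, hl0⟩ := (memGen_iff_list s t).mp h
  suffices H : ∀ c (l : List (Fin (k+1))),
      (l.filter fun i => decide (i ≠ Fin.last k)).length ≤ c →
      ∃ l' : List (Fin (k+1)), (l.map s).sum = (l'.map s).sum ∧
        (l'.filter fun i => decide (i ≠ Fin.last k)).length < s (Fin.last k) by
    obtain ⟨l', h1, h2⟩ := H _ l0 le_rfl
    exact ⟨l', by rw [hl0, h1], h2⟩
  intro c
  induction c with
  | zero => exact fun l hl => ⟨l, rfl, by omega⟩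
  | succ c ih =>
    intro l hl
    by_cases hc : (l.filter fun i => decide (i ≠ Fin.last k)).length < s (Fin.last k)
    · exact ⟨l, rfl, hc⟩
    push_neg at hc
    obtain ⟨A, B, C, hABC, hBne, hBdvd⟩ :=
      exists_chunk s hq0 (l.filter fun i => decide (i ≠ Fin.last k)) hc
    obtain ⟨cB, hcB⟩ := hBdvd
    set p : Fin (k+1) → Bool := fun i => decide (i ≠ Fin.last k) with hp
    set l' := (l.filter fun i => !p i) ++ (A ++ C) ++ List.replicate cB (Fin.last k) with hl'
    have hperm := List.filter_append_perm p l
    have hsum0 : ((l.filter p).map s).sum + ((l.filter fun i => !p i).map s).sum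
        = (l.map s).sum := by
      rw [← (hperm.map s).sum_eq, List.map_append, List.sum_append]
    have hsums : ((l.filter p).map s).sum
        = (A.map s).sum + ((B.map s).sum + (C.map s).sum) := by
      rw [hABC]; simp [List.map_append, List.sum_append]
    have hAmem : ∀ a ∈ A, p a = true := by
      intro a haA
      have hmem : a ∈ l.filter p := by rw [hABC]; simp [haA]
      exact (List.mem_filter.mp hmem).2
    have hCmem : ∀ a ∈ C, p a = true := by
      intro a haC
      have hmem : a ∈ l.filter p := by rw [hABC]; simp [haC]
      exact (List.mem_filter.mp hmem).2
    have hcB' : cB * s (Fin.last k) = (B.map s).sum := by rw [hcB]; ring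
    have hsum' : (l'.map s).sum = (l.map s).sum := by
      rw [hl']
      simp only [List.map_append, List.sum_append, List.map_replicate, List.sum_replicate,
        smul_eq_mul]
      linarith [hsum0, hsums, hcB']
    have hf1 : (l.filter fun i => !p i).filter p = [] := by
      refine filter_eq_nil_of _ _ (fun a ha => ?_)
      have h2 := (List.mem_filter.mp ha).2
      simpa using h2
    have hf2 : (List.replicate cB (Fin.last k)).filter p = [] := by
      refine filter_eq_nil_of _ _ (fun a ha => ?_)
      rw [List.eq_of_mem_replicate ha, hp]
      simp
    have hfilter : (l'.filter p).length = A.length + C.length := by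
      rw [hl']
      simp only [List.filter_append, hf1, filter_eq_self_of p A hAmem,
        filter_eq_self_of p C hCmem, hf2]
      simp
    have hlen' : (l'.filter p).length ≤ c := by
      have h802 : (l.filter p).length = A.length + (B.length + C.length) := by
        rw [hABC]; simp
      have hB1 : 1 ≤ B.length := List.length_pos_iff.mpr hBne
      omega
    obtain ⟨l'', h1, h2⟩ := ih l' hlen'
    exact ⟨l'', by rw [← hsum']; exact h1, h2⟩

lemma key_upper (s : Fin (k+1) → ℕ) (hs0 : ∀ i, 0 < s i)
    {t : ℕ} (h : memGen s t) :
    s (Fin.last k) * minLen s t ≤ t + (s (Fin.last k) - 1) * (s (Fin.last k) - 1) := by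
  obtain ⟨l, hsum, hflt⟩ := exists_reduced s hs0 h
  set q := s (Fin.last k) with hqdef
  set p : Fin (k+1) → Bool := fun i => decide (i ≠ Fin.last k) with hp
  have hmin : minLen s t ≤ l.length := minLen_le s l hsum
  have hperm := List.filter_append_perm p l
  have hlen : (l.filter p).length + (l.filter fun i => !p i).length = l.length := by
    rw [← hperm.length_eq, List.length_append]
  have hsum0 : ((l.filter p).map s).sum + ((l.filter fun i => !p i).map s).sum
      = (l.map s).sum := by
    rw [← (hperm.map s).sum_eq, List.map_append, List.sum_append]
  have hKsum : ((l.filter fun i => !p i).map s).sum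
      = ((l.filter fun i => !p i)).length * q := by
    rw [← List.length_map (as := l.filter fun i => !p i) s]
    apply sum_all_eq
    intro x hx
    obtain ⟨a, ha, rfl⟩ := List.mem_map.mp hx
    have h2 := (List.mem_filter.mp ha).2
    have haK : a = Fin.last k := by
      by_contra hne
      rw [hp] at h2; simp [hne] at h2
    rw [haK]
  have hsmall_le : (l.filter p).length ≤ ((l.filter p).map s).sum := by
    have h3 := length_le_sum' (L := (l.filter p).map s) ?_
    · simpa using h3
    · intro x hx; obtain ⟨a, _, rfl⟩ := List.mem_map.mp hx; exact hs0 a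
  have hq1 : 1 ≤ q := hs0 _
  have ha_le : (l.filter p).length ≤ q - 1 := by omega
  have hfin : q * l.length ≤ t + (q-1)*(q-1) := by
    have e1 : q * l.length = q * (l.filter p).length + q * (l.filter fun i => !p i).length := by
      rw [← hlen]; ring
    have e2 : q * (l.filter p).length
        = (q-1) * (l.filter p).length + (l.filter p).length := by
      have h' : q - 1 + 1 = q := by omega
      calc q * (l.filter p).length = ((q-1)+1) * (l.filter p).length := by rw [h']
        _ = (q-1) * (l.filter p).length + (l.filter p).length := by ring
    have e3 : (q-1) * (l.filter p).length ≤ (q-1) * (q-1) :=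
      Nat.mul_le_mul_left _ ha_le
    have e4 : t = ((l.filter p).map s).sum + (l.filter fun i => !p i).length * q := by
      rw [hsum, ← hsum0, hKsum]
    have e5 : q * (l.filter fun i => !p i).length = (l.filter fun i => !p i).length * q :=
      mul_comm _ _
    linarith
  calc q * minLen s t ≤ q * l.length := Nat.mul_le_mul_left _ hmin
    _ ≤ _ := hfin

lemma key_lower (s : Fin (k+1) → ℕ) (hmax : ∀ i, s i ≤ s (Fin.last k)) {t : ℕ}
    (h : memGen s t) : t ≤ s (Fin.last k) * minLen s t := by
  obtain ⟨l, hsum, hlen⟩ := exists_minLen_list s h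
  have h2 := List.sum_le_card_nsmul (l.map s) (s (Fin.last k)) ?_
  · rw [List.length_map, hlen, smul_eq_mul, mul_comm] at h2
    exact hsum.le.trans h2
  · intro x hx; obtain ⟨a, _, rfl⟩ := List.mem_map.mp hx; exact hmax a

lemma memGen_add {s : Fin (k+1) → ℕ} {a b : ℕ} (ha : memGen s a) (hb : memGen s b) :
    memGen s (a + b) := by
  obtain ⟨z, rfl⟩ := ha; obtain ⟨w, rfl⟩ := hb
  exact ⟨fun i => z i + w i, by
    rw [← Finset.sum_add_distrib]; exact Finset.sum_congr rfl fun i _ => by ring⟩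

lemma memGen_mul {s : Fin (k+1) → ℕ} (c : ℕ) {a : ℕ} (h : memGen s a) : memGen s (c * a) := by
  obtain ⟨z, rfl⟩ := h
  exact ⟨fun i => c * z i, by
    rw [Finset.mul_sum]; exact Finset.sum_congr rfl fun i _ => by ring⟩

lemma memGen_single (s : Fin (k+1) → ℕ) (i0 : Fin (k+1)) (j : ℕ) : memGen s (j * s i0) := by
  refine ⟨fun i => if i0 = i then j else 0, ?_⟩
  simp [ite_mul, Finset.sum_ite_eq]

lemma finset_bezout {ι : Type*} [DecidableEq ι] (F : Finset ι) (f : ι → ℕ) :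
    ∃ a : ι → ℤ, ((F.gcd f : ℕ) : ℤ) = ∑ i ∈ F, a i * f i := by
  induction F using Finset.induction_on with
  | empty => exact ⟨0, by simp⟩
  | @insert x F hx ih =>
    obtain ⟨a, ha⟩ := ih
    refine ⟨fun i => if i = x then Nat.gcdA (f x) (F.gcd f)
      else Nat.gcdB (f x) (F.gcd f) * a i, ?_⟩
    rw [Finset.gcd_insert, Finset.sum_insert hx]
    simp only [if_pos rfl]
    rw [Finset.sum_congr rfl (fun i hi => by
      rw [if_neg (ne_of_mem_of_not_mem hi hx)])]
    have hsum2 : ∑ i ∈ F, (Nat.gcdB (f x) (F.gcd f) * a i) * (f i : ℤ)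
        = Nat.gcdB (f x) (F.gcd f) * ∑ i ∈ F, a i * f i := by
      rw [Finset.mul_sum]; exact Finset.sum_congr rfl fun i _ => by ring
    rw [hsum2, ← ha]
    have hB := Nat.gcd_eq_gcd_ab (f x) (F.gcd f)
    have hgg : (GCDMonoid.gcd (f x) (F.gcd f)) = Nat.gcd (f x) (F.gcd f) := rfl
    rw [hgg, hB]
    simp only [if_true]
    ring

lemma exists_rep (s : Fin (k+1) → ℕ) (hgcd1 : Finset.univ.gcd s = 1) (hs0 : 0 < s 0)
    (c : ℕ) : ∃ t, memGen s t ∧ t % s 0 = c % s 0 := by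
  obtain ⟨a, ha0⟩ := finset_bezout Finset.univ s
  rw [hgcd1] at ha0
  have ha : (1 : ℤ) = ∑ i, a i * (s i : ℤ) := by exact_mod_cast ha0
  set m : ℤ := (s 0 : ℤ) with hm
  have hm0 : m ≠ 0 := by
    simp only [hm, ne_eq, Nat.cast_eq_zero]
    omega
  set z : Fin (k+1) → ℕ := fun i => (a i % m).toNat with hz
  set t1 : ℕ := ∑ i, z i * s i with ht1
  have hmem : memGen s t1 := ⟨z, rfl⟩
  have hdvd : m ∣ (t1 : ℤ) - 1 := by
    have hcast : (t1 : ℤ) = ∑ i, (a i % m) * s i := by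
      rw [ht1]
      push_cast
      refine Finset.sum_congr rfl fun i _ => ?_
      rw [hz]
      simp only []
      rw [Int.toNat_of_nonneg (Int.emod_nonneg _ hm0)]
    have hdiff : (t1 : ℤ) - 1 = ∑ i, (a i % m - a i) * s i := by
      rw [hcast, ha, ← Finset.sum_sub_distrib]
      exact Finset.sum_congr rfl fun i _ => by ring
    rw [hdiff]
    refine Finset.dvd_sum fun i _ => ?_
    have hterm : a i % m - a i = m * (-(a i / m)) := by
      rw [Int.emod_def]; ring
    exact Dvd.dvd.mul_right ⟨-(a i / m), hterm⟩ _
  have hmod : t1 % s 0 = 1 % s 0 := by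
    have h1 : (1 : ℕ) ≡ t1 [MOD s 0] := by
      rw [Nat.modEq_iff_dvd]
      push_cast
      exact hdvd
    exact h1.symm
  refine ⟨c * t1, memGen_mul c hmem, ?_⟩
  have h2 : c * t1 ≡ c * 1 [MOD s 0] := Nat.ModEq.mul_left c hmod
  exact (by simpa using h2 : c * t1 ≡ c [MOD s 0])

lemma exists_rep_small (s : Fin (k+1) → ℕ) (hgcd1 : Finset.univ.gcd s = 1)
    (hs0 : ∀ i, 0 < s i) (hmax : ∀ i, s i ≤ s (Fin.last k)) (c : ℕ) :
    ∃ t, memGen s t ∧ t % s 0 = c % s 0 ∧ t ≤ (s 0 - 1) * s (Fin.last k) := by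
  set A := {t | memGen s t ∧ t % s 0 = c % s 0} with hA
  have hne : A.Nonempty := by
    obtain ⟨t, h1, h2⟩ := exists_rep s hgcd1 (hs0 0) c
    exact ⟨t, h1, h2⟩
  have hmem := Nat.sInf_mem hne
  set t0 := sInf A with ht0
  obtain ⟨l, hl⟩ := (memGen_iff_list s t0).mp hmem.1
  by_cases hlen : l.length < s 0
  · refine ⟨t0, hmem.1, hmem.2, ?_⟩
    have hb : (l.map s).sum ≤ l.length * s (Fin.last k) := by
      have h2 := List.sum_le_card_nsmul (l.map s) (s (Fin.last k)) ?_
      · rwa [List.length_map, smul_eq_mul] at h2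
      · intro x hx; obtain ⟨i, _, rfl⟩ := List.mem_map.mp hx; exact hmax i
    have : l.length * s (Fin.last k) ≤ (s 0 - 1) * s (Fin.last k) :=
      Nat.mul_le_mul_right _ (by omega)
    omega
  · exfalso
    push_neg at hlen
    obtain ⟨A₁, B, C, hABC, hBne, hBdvd⟩ := exists_chunk s (hs0 0) l hlen
    obtain ⟨u, hu⟩ := hBdvd
    set t' := ((A₁ ++ C).map s).sum with ht'
    have ht'mem : memGen s t' := (memGen_iff_list s t').mpr ⟨A₁ ++ C, rfl⟩
    have hsplit : t0 = t' + s 0 * u := by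
      rw [hl, hABC]
      simp only [List.map_append, List.sum_append, ht', ← hu]
      ring
    have hBpos : 0 < (B.map s).sum := by
      obtain ⟨b, Bs, rfl⟩ := List.exists_cons_of_ne_nil hBne
      have := hs0 b
      simp only [List.map_cons, List.sum_cons]
      omega
    have ht'A : t' ∈ A := by
      refine ⟨ht'mem, ?_⟩
      have : t0 % s 0 = t' % s 0 := by
        rw [hsplit, Nat.add_mul_mod_self_left]
      rw [← this]
      exact hmem.2
    have hle := Nat.sInf_le ht'A
    rw [← ht0] at hle
    omega

lemma mem_of_big (s : Fin (k+1) → ℕ) (hgcd1 : Finset.univ.gcd s = 1)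
    (hs0 : ∀ i, 0 < s i) (hmax : ∀ i, s i ≤ s (Fin.last k)) {m : ℕ}
    (hm : s (Fin.last k) * s (Fin.last k) ≤ m) : memGen s m := by
  obtain ⟨t, htmem, htmod, htle⟩ := exists_rep_small s hgcd1 hs0 hmax m
  have h0q : s 0 ≤ s (Fin.last k) := hmax 0
  have hq0 : 0 < s (Fin.last k) := hs0 _
  have htm : t ≤ m := by
    have h1 : (s 0 - 1) * s (Fin.last k) ≤ (s (Fin.last k) - 1) * s (Fin.last k) :=
      Nat.mul_le_mul_right _ (by omega)
    have h2 : (s (Fin.last k) - 1) * s (Fin.last k) < s (Fin.last k) * s (Fin.last k) :=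
      (Nat.mul_lt_mul_right hq0).mpr (by omega)
    omega
  have hdvd : s 0 ∣ m - t := (Nat.modEq_iff_dvd' htm).mp htmod
  obtain ⟨j, hj⟩ := hdvd
  have hmeq : m = t + s 0 * j := by omega
  rw [hmeq]
  have hsj := memGen_single s 0 j
  rw [mul_comm] at hsj
  exact memGen_add htmem hsj

end GenusAux

open GenusAux

/-- Under `n > r_k²`, `dn ∈ S`, `gcd(n,d) = 1`, with `rᵢ = d·sᵢ` (so that
`S/d = ⟨s₁,…,s_k⟩` is primitive):
`g(M_n) = Σ_{i=0}^{n−1} ⌊di/n⌋ + d·g(S/d) + Σ_{i<n, di∈S} m_S(di) + Σ_{i≥0, di∉S} m_S(di+dn)`. -/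
theorem genus_formula {k : ℕ} (r s : Fin (k + 1) → ℕ)
    (hmono : StrictMono r) (hpos : 0 < r 0)
    (d : ℕ) (hd : d = Finset.univ.gcd r) (hrs : ∀ i, r i = d * s i)
    (n : ℕ) (hn : n > (r (Fin.last k)) ^ 2)
    (hgcd : Nat.gcd n d = 1) (hdn : memGen r (d * n)) :
    genus (shiftGen n r) =
      (∑ i ∈ Finset.range n, d * i / n) + d * genus s +
        (∑ᶠ i ∈ {i : ℕ | i < n ∧ memGen r (d * i)}, minLen r (d * i)) +
        ∑ᶠ i ∈ {i : ℕ | ¬ memGen r (d * i)}, minLen r (d * i + d * n) := by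
  classical
  have hr0 : 0 < d * s 0 := by rw [← hrs 0]; exact hpos
  have hd0 : 0 < d := by
    rcases Nat.eq_zero_or_pos d with h | h
    · rw [h] at hr0; simp at hr0
    · exact h
  have hs0 : 0 < s 0 := by
    rcases Nat.eq_zero_or_pos (s 0) with h | h
    · rw [h] at hr0; simp at hr0
    · exact h
  have hsmono : StrictMono s := by
    intro i j hij
    have h2 := hmono hij
    rw [hrs i, hrs j] at h2
    exact lt_of_mul_lt_mul_left h2 (Nat.zero_le d)
  have hspos : ∀ i, 0 < s i := fun i => lt_of_lt_of_le hs0 (hsmono.monotone (Fin.zero_le i))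
  have hmax : ∀ i, s i ≤ s (Fin.last k) := fun i => hsmono.monotone (Fin.le_last i)
  have hq0 : 0 < s (Fin.last k) := hspos _
  have hgcd1 : Finset.univ.gcd s = 1 := by
    have h2 : Finset.univ.gcd r = Finset.univ.gcd (fun i => d * s i) :=
      Finset.gcd_congr rfl fun i _ => hrs i
    have h1 : Finset.univ.gcd r = d * Finset.univ.gcd s := by
      rw [h2, Finset.gcd_mul_left]
      simp
    rw [← hd] at h1
    rcases Nat.eq_zero_or_pos (Finset.univ.gcd s) with h | h
    · rw [h, mul_zero] at h1; omega
    · by_contra hne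
      have h3 : 2 ≤ Finset.univ.gcd s := by omega
      have h4 : d * 2 ≤ d * Finset.univ.gcd s := Nat.mul_le_mul_left d h3
      omega
  obtain ⟨q, hqdef⟩ : ∃ q, q = s (Fin.last k) := ⟨_, rfl⟩
  have hrK : r (Fin.last k) = d * q := by rw [hqdef]; exact hrs _
  have hqq0 : 0 < q := by rw [hqdef]; exact hq0
  have hnq : q * q < n := by
    have h1 : q ≤ r (Fin.last k) := by rw [hrK]; exact Nat.le_mul_of_pos_left q hd0
    have h2 : q * q ≤ r (Fin.last k) * r (Fin.last k) := Nat.mul_le_mul h1 h1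
    rw [pow_two] at hn
    omega
  have hqq1 : 1 ≤ q * q := Nat.mul_pos hqq0 hqq0
  have hn1 : 1 < n := by omega
  have hn0 : 0 < n := by omega
  have hsum_ds : ∀ z : Fin (k+1) → ℕ, ∑ i, z i * r i = d * ∑ i, z i * s i := by
    intro z
    rw [Finset.mul_sum]
    exact Finset.sum_congr rfl fun i _ => by rw [hrs i]; ring
  have hmem_rs : ∀ a, memGen r (d * a) ↔ memGen s a := by
    intro a
    constructor
    · rintro ⟨z, hz⟩
      rw [hsum_ds z] at hz
      exact ⟨z, Nat.eq_of_mul_eq_mul_left hd0 hz⟩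
    · rintro ⟨z, hz⟩
      exact ⟨z, by rw [hsum_ds z, ← hz]⟩
  have hminLen_rs : ∀ a, minLen r (d * a) = minLen s a := by
    intro a
    unfold minLen
    congr 1
    ext ℓ
    constructor
    · rintro ⟨z, hz, rfl⟩
      rw [hsum_ds z] at hz
      exact ⟨z, Nat.eq_of_mul_eq_mul_left hd0 hz, rfl⟩
    · rintro ⟨z, hz, rfl⟩
      exact ⟨z, by rw [hsum_ds z, ← hz], rfl⟩
  have hM : ∀ x, memGen (shiftGen n r) x ↔
      ∃ u c : ℕ, memGen s u ∧ minLen s u ≤ c ∧ x = c * n + d * u := by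
    intro x
    constructor
    · rintro ⟨z, hz⟩
      refine ⟨∑ i : Fin (k+1), z i.succ * s i, z 0 + ∑ i : Fin (k+1), z i.succ,
        ⟨fun i : Fin (k+1) => z i.succ, rfl⟩, ?_, ?_⟩
      · have h3 : minLen s (∑ i : Fin (k+1), z i.succ * s i) ≤ ∑ i : Fin (k+1), z i.succ :=
          Nat.sInf_le ⟨fun i : Fin (k+1) => z i.succ, rfl, rfl⟩
        omega
      · rw [hz, Fin.sum_univ_succ]
        simp only [shiftGen, Fin.cons_zero, Fin.cons_succ]
        have h4 : ∀ i : Fin (k+1), z i.succ * (n + r i)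
            = z i.succ * n + d * (z i.succ * s i) := fun i => by rw [hrs i]; ring
        rw [Finset.sum_congr rfl fun i _ => h4 i, Finset.sum_add_distrib,
          ← Finset.sum_mul, ← Finset.mul_sum]
        ring
    · rintro ⟨u, c, hu, hc, rfl⟩
      have hne : (lenSet s u).Nonempty := by
        obtain ⟨z, hz⟩ := hu
        exact ⟨∑ i, z i, z, hz, rfl⟩
      obtain ⟨z, hz1, hz2⟩ := Nat.sInf_mem hne
      refine ⟨Fin.cons (c - ∑ i, z i) z, ?_⟩
      rw [Fin.sum_univ_succ]
      simp only [shiftGen, Fin.cons_zero, Fin.cons_succ]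
      have h4 : ∀ i : Fin (k+1), z i * (n + r i) = z i * n + d * (z i * s i) :=
        fun i => by rw [hrs i]; ring
      rw [Finset.sum_congr rfl fun i _ => h4 i, Finset.sum_add_distrib,
        ← Finset.sum_mul, ← Finset.mul_sum, ← hz1]
      have h5 : ∑ i, z i ≤ c := by
        have h6 : minLen s u = ∑ i, z i := hz2
        omega
      have h6 : (c - ∑ i, z i) * n + (∑ i, z i) * n = c * n := by
        rw [← add_mul]
        congr 1
        omega
      omega
  obtain ⟨tf, htfi⟩ : ∃ tf : ℕ → ℕ, ∀ i, tf i = if memGen s i then i else i + n :=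
    ⟨_, fun _ => rfl⟩
  obtain ⟨Fm, hFmi⟩ : ∃ Fm : ℕ → ℕ, ∀ i, Fm i = d * tf i + n * minLen s (tf i) :=
    ⟨_, fun _ => rfl⟩
  have htfmem : ∀ i, memGen s (tf i) := by
    intro i
    by_cases h : memGen s i
    · rw [htfi i, if_pos h]; exact h
    · have h2 : s (Fin.last k) * s (Fin.last k) ≤ i + n := by rw [← hqdef]; omega
      rw [htfi i, if_neg h]
      exact mem_of_big s hgcd1 hspos hmax h2
  have htfmod : ∀ i, tf i % n = i % n := by
    intro i
    by_cases h : memGen s i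
    · rw [htfi i, if_pos h]
    · rw [htfi i, if_neg h, Nat.add_mod_right]
  have hFle : ∀ i, i < n → ∀ x, memGen (shiftGen n r) x → x % n = (d * i) % n → Fm i ≤ x := by
    intro i hi x hx hmod
    obtain ⟨u, c, hu, hc, rfl⟩ := (hM x).mp hx
    have h0 : c * n + d * u = d * u + n * c := by ring
    rw [h0, Nat.add_mul_mod_self_left] at hmod
    have h2 : u % n = i % n := Nat.ModEq.cancel_left_of_coprime hgcd hmod
    have h3 : tf i ≤ u := by
      by_cases hiT : memGen s i
      · have h7 : i % n = i := Nat.mod_eq_of_lt hi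
        rw [htfi i, if_pos hiT]
        calc i = i % n := h7.symm
          _ = u % n := h2.symm
          _ ≤ u := Nat.mod_le u n
      · rw [htfi i, if_neg hiT]
        have hne : u ≠ i := fun h => hiT (h ▸ hu)
        have hiu : u % n = i := by rw [h2, Nat.mod_eq_of_lt hi]
        have hdm := Nat.div_add_mod u n
        rcases Nat.eq_zero_or_pos (u / n) with h8 | h8
        · exfalso; apply hne
          rw [h8, Nat.mul_zero] at hdm
          omega
        · have h9 : n * 1 ≤ n * (u / n) := Nat.mul_le_mul_left n h8
          rw [Nat.mul_one] at h9
          omega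
    have h4 : tf i % n = u % n := by rw [htfmod i, h2]
    have h5 : n ∣ u - tf i := (Nat.modEq_iff_dvd' h3).mp h4
    obtain ⟨j, hj⟩ := h5
    rcases Nat.eq_zero_or_pos j with hj0 | hj0
    · have h7 : u = tf i := by
        rw [hj0, Nat.mul_zero] at hj
        omega
      have h8 : n * minLen s u ≤ n * c := Nat.mul_le_mul_left n hc
      rw [hFmi i, ← h7]
      omega
    · have hutf : u = tf i + n * j := by
        rw [← hj]
        omega
      have hup : q * minLen s (tf i) ≤ tf i + (q-1)*(q-1) := by
        rw [hqdef]; exact key_upper s hspos (htfmem i)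
      have hlow : u ≤ q * minLen s u := by
        rw [hqdef]; exact key_lower s hmax hu
      have hsq : (q-1)*(q-1) < n := by
        have h7 : (q-1)*(q-1) ≤ q * q := Nat.mul_le_mul (by omega) (by omega)
        omega
      have hnj : n ≤ n * j := Nat.le_mul_of_pos_right n hj0
      have hml : q * minLen s (tf i) < q * minLen s u := by omega
      have hml2 : minLen s (tf i) ≤ minLen s u :=
        le_of_lt (lt_of_mul_lt_mul_left hml (Nat.zero_le q))
      have e1 : d * tf i ≤ d * u := Nat.mul_le_mul_left d (by omega)
      have e2 : n * minLen s (tf i) ≤ n * minLen s u := Nat.mul_le_mul_left n hml2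
      have e3 : n * minLen s u ≤ n * c := Nat.mul_le_mul_left n hc
      rw [hFmi i]
      omega
  have hFmod : ∀ i, Fm i % n = (d * i) % n := by
    intro i
    rw [hFmi i, Nat.add_mul_mod_self_left]
    exact Nat.ModEq.mul_left d (htfmod i)
  have hFmem : ∀ i x, x % n = (d * i) % n → Fm i ≤ x → memGen (shiftGen n r) x := by
    intro i x hmod hge
    have h4 : Fm i % n = x % n := by rw [hFmod i, hmod]
    have h5 : n ∣ x - Fm i := (Nat.modEq_iff_dvd' hge).mp h4
    obtain ⟨j, hj⟩ := h5
    refine (hM x).mpr ⟨tf i, minLen s (tf i) + j, htfmem i, Nat.le_add_right _ _, ?_⟩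
    have hx2 : x = Fm i + n * j := by omega
    rw [hx2, hFmi i]
    ring
  obtain ⟨e, -, he⟩ := Nat.exists_mul_mod_eq_one_of_coprime (Nat.Coprime.symm hgcd) hn1
  obtain ⟨G, hG⟩ : ∃ G : Finset ℕ, G = (Finset.range n).biUnion
      (fun i => (Finset.range (Fm i / n)).image (fun j => (d*i) % n + n * j)) := ⟨_, rfl⟩
  have hGmem : ∀ x : ℕ, x ∈ G ↔ ∃ i, i < n ∧ ∃ j, j < Fm i / n ∧ (d*i) % n + n * j = x := by
    intro x
    rw [hG]
    constructor
    · intro hx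
      obtain ⟨i, hi, hx2⟩ := Finset.mem_biUnion.mp hx
      obtain ⟨j, hj, hx3⟩ := Finset.mem_image.mp hx2
      exact ⟨i, Finset.mem_range.mp hi, j, Finset.mem_range.mp hj, hx3⟩
    · rintro ⟨i, hi, j, hj, rfl⟩
      exact Finset.mem_biUnion.mpr ⟨i, Finset.mem_range.mpr hi,
        Finset.mem_image.mpr ⟨j, Finset.mem_range.mpr hj, rfl⟩⟩
  have hGaps : {m : ℕ | ¬ memGen (shiftGen n r) m} = ↑G := by
    ext x
    rw [Set.mem_setOf_eq, Finset.mem_coe, hGmem x]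
    constructor
    · intro hx
      have hin : (e * x) % n < n := Nat.mod_lt _ hn0
      have hdi : (d * ((e * x) % n)) % n = x % n := by
        have h1 : d * ((e*x) % n) ≡ d * (e * x) [MOD n] :=
          Nat.ModEq.mul_left d (Nat.mod_modEq _ _)
        have h2 : d * (e * x) = (d * e) * x := by ring
        have h3 : d * e ≡ 1 [MOD n] := by
          show (d * e) % n = 1 % n
          rw [he, Nat.mod_eq_of_lt hn1]
        have h4 : (d * e) * x ≡ 1 * x [MOD n] := Nat.ModEq.mul_right x h3
        have h5 : d * ((e*x) % n) ≡ x [MOD n] := by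
          calc d * ((e*x) % n) ≡ d * (e * x) [MOD n] := h1
            _ = (d * e) * x := h2
            _ ≡ 1 * x [MOD n] := h4
            _ = x := one_mul x
        exact h5
      refine ⟨(e * x) % n, hin, x / n, ?_, ?_⟩
      · have hlt : x < Fm ((e * x) % n) := by
          by_contra hle
          push_neg at hle
          exact hx (hFmem _ x hdi.symm hle)
        have hFi := Nat.div_add_mod (Fm ((e * x) % n)) n
        have hxi := Nat.div_add_mod x n
        have hmodeq : x % n = Fm ((e * x) % n) % n := by rw [hFmod, hdi]
        have h6 : n * (x / n) < n * (Fm ((e * x) % n) / n) := by omega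
        exact lt_of_mul_lt_mul_left h6 (Nat.zero_le n)
      · have hxi := Nat.div_add_mod x n
        omega
    · rintro ⟨i, hin, j, hjlt, rfl⟩
      intro hy
      have hymod : ((d*i) % n + n * j) % n = (d * i) % n := by
        rw [Nat.add_mul_mod_self_left, Nat.mod_mod_of_dvd _ dvd_rfl]
      have hylt : (d*i) % n + n * j < Fm i := by
        have hFi := Nat.div_add_mod (Fm i) n
        have h2 : n * j < n * (Fm i / n) := (Nat.mul_lt_mul_left hn0).mpr hjlt
        have h3 : Fm i % n = (d*i) % n := hFmod i
        omega
      exact absurd (hFle i hin _ hy hymod) (by omega)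
  have hcard : G.card = ∑ i ∈ Finset.range n, Fm i / n := by
    rw [hG, Finset.card_biUnion]
    · refine Finset.sum_congr rfl fun i hi => ?_
      rw [Finset.card_image_of_injective _ ?_, Finset.card_range]
      intro j j' hjj
      simp only [] at hjj
      have h7 : n * j = n * j' := by omega
      exact Nat.eq_of_mul_eq_mul_left hn0 h7
    · intro i hi i' hi' hne
      rw [Function.onFun, Finset.disjoint_left]
      rintro x hx hx'
      obtain ⟨j, _, rfl⟩ := Finset.mem_image.mp hx
      obtain ⟨j', _, hj'⟩ := Finset.mem_image.mp hx'
      have h1 : ((d*i) % n + n * j) % n = (d*i) % n := by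
        rw [Nat.add_mul_mod_self_left, Nat.mod_mod_of_dvd _ dvd_rfl]
      have h2 : ((d*i') % n + n * j') % n = (d*i') % n := by
        rw [Nat.add_mul_mod_self_left, Nat.mod_mod_of_dvd _ dvd_rfl]
      rw [hj'] at h2
      have h3 : (d * i) % n = (d * i') % n := by rw [← h1, ← h2]
      have h4 : i % n = i' % n := Nat.ModEq.cancel_left_of_coprime hgcd h3
      rw [Nat.mod_eq_of_lt (Finset.mem_range.mp hi),
        Nat.mod_eq_of_lt (Finset.mem_range.mp hi')] at h4
      exact hne h4
  have hgenusM : genus (shiftGen n r) = ∑ i ∈ Finset.range n, Fm i / n := by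
    rw [genus, hGaps, Set.ncard_coe_finset, hcard]
  have hFdiv : ∀ i, i < n → Fm i / n
      = (if memGen s i then minLen s i + d * i / n
         else minLen s (i + n) + d + d * i / n) := by
    intro i hi
    by_cases h : memGen s i
    · rw [if_pos h, hFmi i, htfi i, if_pos h]
      rw [Nat.add_mul_div_left _ _ hn0]
      omega
    · rw [if_neg h, hFmi i, htfi i, if_neg h]
      have h1 : d * (i + n) + n * minLen s (i+n) = d*i + n*(d + minLen s (i+n)) := by ring
      rw [h1, Nat.add_mul_div_left _ _ hn0]
      omega
  obtain ⟨Tn, hTn⟩ : ∃ T : Finset ℕ, T = (Finset.range n).filter (fun i => memGen s i) :=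
    ⟨_, rfl⟩
  obtain ⟨Nn, hNn⟩ : ∃ N : Finset ℕ, N = (Finset.range n).filter (fun i => ¬ memGen s i) :=
    ⟨_, rfl⟩
  have hgenus_s : genus s = Nn.card := by
    rw [genus]
    have hset : {m : ℕ | ¬ memGen s m} = ↑Nn := by
      ext m
      simp only [Set.mem_setOf_eq, hNn, Finset.coe_filter, Finset.mem_range]
      constructor
      · intro h
        refine ⟨?_, h⟩
        by_contra hle
        push_neg at hle
        exact h (mem_of_big s hgcd1 hspos hmax (by rw [← hqdef]; omega))
      · exact fun h => h.2
    rw [hset, Set.ncard_coe_finset]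
  have hsum_split : ∑ i ∈ Finset.range n, Fm i / n
      = (∑ i ∈ Tn, (minLen s i + d * i / n))
        + ∑ i ∈ Nn, (minLen s (i + n) + d + d * i / n) := by
    rw [← Finset.sum_filter_add_sum_filter_not (Finset.range n) (fun i => memGen s i)
      (fun i => Fm i / n), ← hTn, ← hNn]
    congr 1
    · refine Finset.sum_congr rfl fun i hi => ?_
      rw [hTn] at hi
      rw [hFdiv i (Finset.mem_range.mp (Finset.mem_filter.mp hi).1),
        if_pos (Finset.mem_filter.mp hi).2]
    · refine Finset.sum_congr rfl fun i hi => ?_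
      rw [hNn] at hi
      rw [hFdiv i (Finset.mem_range.mp (Finset.mem_filter.mp hi).1),
        if_neg (Finset.mem_filter.mp hi).2]
  have hfs1 : (∑ᶠ i ∈ {i : ℕ | i < n ∧ memGen r (d * i)}, minLen r (d * i))
      = ∑ i ∈ Tn, minLen s i := by
    have hset : {i : ℕ | i < n ∧ memGen r (d * i)} = ↑Tn := by
      ext i
      simp only [Set.mem_setOf_eq, hTn, Finset.coe_filter, Finset.mem_range, hmem_rs i]
    rw [hset, finsum_mem_coe_finset]
    exact Finset.sum_congr rfl fun i _ => hminLen_rs i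
  have hfs2 : (∑ᶠ i ∈ {i : ℕ | ¬ memGen r (d * i)}, minLen r (d * i + d * n))
      = ∑ i ∈ Nn, minLen s (i + n) := by
    have hset : {i : ℕ | ¬ memGen r (d * i)} = ↑Nn := by
      ext i
      simp only [Set.mem_setOf_eq, hNn, Finset.coe_filter, Finset.mem_range, hmem_rs i]
      constructor
      · intro h
        refine ⟨?_, h⟩
        by_contra hle
        push_neg at hle
        exact h (mem_of_big s hgcd1 hspos hmax (by rw [← hqdef]; omega))
      · exact fun h => h.2
    rw [hset, finsum_mem_coe_finset]
    refine Finset.sum_congr rfl fun i _ => ?_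
    have h7 : d * i + d * n = d * (i + n) := by ring
    rw [h7, hminLen_rs]
  rw [hgenusM, hsum_split, hfs1, hfs2, hgenus_s]
  simp only [Finset.sum_add_distrib, Finset.sum_const, smul_eq_mul]
  have hRange : ∑ i ∈ Tn, d * i / n + ∑ i ∈ Nn, d * i / n
      = ∑ i ∈ Finset.range n, d * i / n := by
    rw [hTn, hNn]
    exact Finset.sum_filter_add_sum_filter_not _ _ _
  have hComm : Nn.card * d = d * Nn.card := mul_comm _ _
  omega
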